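/- Let b > 0, σ > 0 and set c = 1/4. For u_ε(t) = (b + 1/(2σ) − t)^{1/2}, the quantity ∫₀ᵇ |u'(t)|² dt + σ|u(b)|² − c∫₀ᵇ (b − t + 1/(2σ))⁻² |u(t)|² dt equals (1 − 4c)·(1/4)·log(1 + 2σb) + (bounded terms as b → ∞); consequently, if a constant c satisfies ∫₀ᵇ |u'|² dt + σ|u(b)|² ≥ c∫₀ᵇ (b − t + 1/(2σ))⁻²|u|² dt for all b > 0 and all u ∈ C¹([0,b]), then c ≤ 1/4. -/

import Mathlib

theorem sharpness_of_one_quarter (σ c : ℝ) (hσ : 0 < σ)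
    (h : ∀ b : ℝ, 0 < b → ∀ u : ℝ → ℝ, ContDiffOn ℝ 1 u (Set.Icc 0 b) →
      (∫ t in (0:ℝ)..b, |deriv u t| ^ 2) + σ * |u b| ^ 2 ≥
        c * ∫ t in (0:ℝ)..b, ((b - t + 1 / (2 * σ)) ^ 2)⁻¹ * |u t| ^ 2) :
    c ≤ 1 / 4 := by
  by_contra hcon
  push_neg at hcon
  have hc' : 0 < c - 1/4 := by linarith
  set Δ : ℝ := 1/(c - 1/4) with hΔdef
  have hΔ : 0 < Δ := by positivity
  set s : ℝ := 1/(2*σ) with hs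
  have hs0 : 0 < s := by positivity
  set b : ℝ := (Real.exp Δ - 1) * s with hbdef
  have hexp : 1 < Real.exp Δ := by
    calc (1:ℝ) = Real.exp 0 := by simp
    _ < Real.exp Δ := Real.exp_lt_exp.mpr hΔ
  have hb : 0 < b := by
    have : 0 < Real.exp Δ - 1 := by linarith
    positivity
  set a : ℝ := b + s with hadef
  have hab : a - b = s := by ring
  have ha : ∀ t ∈ Set.Icc (0:ℝ) b, 0 < a - t := by
    intro t ht
    have := ht.2
    simp only [hadef]
    linarith
  set u : ℝ → ℝ := fun t => Real.sqrt (a - t) with hu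
  have hcd : ContDiffOn ℝ 1 u (Set.Icc 0 b) := by
    intro t ht
    have h1 : a - t ≠ 0 := (ha t ht).ne'
    exact ((Real.contDiffAt_sqrt h1).comp t
      ((contDiff_const.sub contDiff_id).contDiffAt)).contDiffWithinAt
  have hderiv : ∀ t, 0 < a - t → HasDerivAt u (-1/(2*Real.sqrt (a-t))) t := by
    intro t ht
    have h1 : HasDerivAt (fun t : ℝ => a - t) (-1) t := by
      simpa using (hasDerivAt_id t).const_sub a
    simpa using h1.sqrt ht.ne'
  -- antiderivative facts
  have hF : ∀ t ∈ Set.uIcc (0:ℝ) b,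
      HasDerivAt (fun t => -Real.log (a - t)) ((a - t)⁻¹) t := by
    intro t ht
    rw [Set.uIcc_of_le hb.le] at ht
    have hpos := ha t ht
    have h1 : HasDerivAt (fun t : ℝ => a - t) (-1) t := by
      simpa using (hasDerivAt_id t).const_sub a
    have : HasDerivAt (fun y => -Real.log (a - y)) (-(-1 / (a - t))) t := (h1.log hpos.ne').neg
    convert this using 1
    ring
  have hcont : ContinuousOn (fun t : ℝ => (a - t)⁻¹) (Set.uIcc 0 b) := by
    apply ContinuousOn.inv₀ (by fun_prop)
    intro t ht
    rw [Set.uIcc_of_le hb.le] at ht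
    exact (ha t ht).ne'
  have hFTC : (∫ t in (0:ℝ)..b, (a - t)⁻¹) = Real.log a - Real.log s := by
    rw [intervalIntegral.integral_eq_sub_of_hasDerivAt hF
      (hcont.intervalIntegrable)]
    rw [hab]
    simp
    ring
  -- integral 1
  have hI1 : (∫ t in (0:ℝ)..b, |deriv u t|^2)
      = (1/4) * (Real.log a - Real.log s) := by
    have hcongr : ∀ t ∈ Set.uIcc (0:ℝ) b,
        |deriv u t|^2 = (1/4) * (a - t)⁻¹ := by
      intro t ht
      rw [Set.uIcc_of_le hb.le] at ht
      have hpos := ha t ht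
      have hd : deriv u t = -1/(2*Real.sqrt (a-t)) := (hderiv t hpos).deriv
      have hsq : Real.sqrt (a-t) ^ 2 = a - t := Real.sq_sqrt hpos.le
      have hsp : (0:ℝ) < Real.sqrt (a-t) := Real.sqrt_pos.mpr hpos
      rw [hd, sq_abs, div_pow, mul_pow, hsq]
      norm_num
      rw [mul_comm]
    rw [intervalIntegral.integral_congr hcongr, intervalIntegral.integral_const_mul,
      hFTC]
  -- integral 2
  have hI2 : (∫ t in (0:ℝ)..b, ((b - t + 1 / (2 * σ)) ^ 2)⁻¹ * |u t| ^ 2)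
      = Real.log a - Real.log s := by
    have hcongr : ∀ t ∈ Set.uIcc (0:ℝ) b,
        ((b - t + 1 / (2 * σ)) ^ 2)⁻¹ * |u t| ^ 2 = (a - t)⁻¹ := by
      intro t ht
      rw [Set.uIcc_of_le hb.le] at ht
      have hpos := ha t ht
      have h1 : b - t + 1/(2*σ) = a - t := by rw [hadef, hs]; ring
      have hsq : |u t| ^ 2 = a - t := by
        rw [sq_abs, hu]; exact Real.sq_sqrt hpos.le
      rw [h1, hsq]
      field_simp
    rw [intervalIntegral.integral_congr hcongr, hFTC]
  have hub : |u b| ^ 2 = s := by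
    rw [sq_abs, hu]
    simp only [hab]
    exact Real.sq_sqrt hs0.le
  have hkey := h b hb u hcd
  rw [hI1, hI2, hub] at hkey
  have hlog : Real.log a - Real.log s = Δ := by
    have : a = Real.exp Δ * s := by rw [hadef, hbdef]; ring
    rw [this, Real.log_mul (Real.exp_pos Δ).ne' hs0.ne', Real.log_exp]
    ring
  rw [hlog] at hkey
  have hσs : σ * s = 1/2 := by
    rw [hs]; field_simp
  rw [hσs] at hkey
  have h1 : (c - 1/4) * Δ = 1 := by
    rw [hΔdef]; exact mul_one_div_cancel hc'.ne'
  nlinarith [hkey]
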